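/- For every nonnegative integer n, the sum over all pairs of nonnegative integers (i, j) with i + j = n of (B_{2i} − C_{2i}) · B_{2j} equals the sum over all pairs of nonnegative integers (i, j) with i + j = n and j ≥ 1 of B_{2i+1} · B_{2j−1}. -/

import Mathlib

open PowerSeries Finset

private lemma binom_step (n : ℕ) :
    Nat.centralBinom (n+1) + 2 * catalan n = 4 * Nat.centralBinom n := by
  apply Nat.eq_of_mul_eq_mul_left (show 0 < n+1 by omega)
  rw [Nat.mul_add, Nat.succ_mul_centralBinom_succ,
    show (n+1)*(2*catalan n) = 2*((n+1)*catalan n) by ring,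
    succ_mul_catalan_eq_centralBinom]
  ring

private noncomputable def cps : PowerSeries ℤ := PowerSeries.mk fun n => (catalan n : ℤ)
private noncomputable def bps : PowerSeries ℤ := PowerSeries.mk fun n => (Nat.centralBinom n : ℤ)
private noncomputable def sg : PowerSeries ℤ →+* PowerSeries ℤ := rescale (-1)
private noncomputable def cps' : PowerSeries ℤ := sg cps
private noncomputable def bps' : PowerSeries ℤ := sg bps

private lemma coeff_cps (k : ℕ) : coeff k cps = catalan k := by rw [cps, coeff_mk]
private lemma coeff_bps (k : ℕ) : coeff k bps = Nat.centralBinom k := by rw [bps, coeff_mk]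
private lemma coeff_cps' (k : ℕ) : coeff k cps' = (-1)^k * catalan k := by
  rw [cps', sg, coeff_rescale, coeff_cps]
private lemma coeff_bps' (k : ℕ) : coeff k bps' = (-1)^k * Nat.centralBinom k := by
  rw [bps', sg, coeff_rescale, coeff_bps]

private lemma hc : cps = 1 + X * cps ^ 2 := by
  ext n
  cases n with
  | zero => simp [cps]
  | succ n =>
    rw [map_add, coeff_succ_X_mul, sq, coeff_mul]
    simp only [cps, coeff_mk, coeff_one, Nat.succ_ne_zero, if_false, zero_add]
    rw [catalan_succ']
    push_cast
    rfl

private lemma hb : bps = 1 + X * (4 * bps - 2 * cps) := by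
  ext n
  cases n with
  | zero => simp [bps]
  | succ n =>
    rw [map_add, coeff_succ_X_mul, map_sub]
    have e4 : (4 : PowerSeries ℤ) * bps = (4:ℤ) • bps := by rw [zsmul_eq_mul]; norm_num
    have e2 : (2 : PowerSeries ℤ) * cps = (2:ℤ) • cps := by rw [zsmul_eq_mul]; norm_num
    rw [e4, e2, map_smul, map_smul, smul_eq_mul, smul_eq_mul]
    simp only [bps, cps, coeff_mk, coeff_one, Nat.succ_ne_zero, if_false, zero_add]
    have := binom_step n
    push_cast at this ⊢
    linarith

private lemma sgX : sg X = -X := rescale_neg_one_X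

private lemma hc' : cps' = 1 - X * cps' ^ 2 := by
  have h := congrArg sg hc
  rw [map_add, map_mul, map_pow, map_one, sgX] at h
  show sg cps = 1 - X * (sg cps) ^ 2
  linear_combination h

private lemma hmain : 4 * (bps * bps') = (cps + cps') * (bps + bps') := by
  set u : PowerSeries ℤ := 1 - 2 * X * cps with hu
  set u' : PowerSeries ℤ := 1 + 2 * X * cps' with hu'
  have hune : u ≠ 0 := by
    intro h
    have := congrArg constantCoeff h
    simp [hu] at this
  have hu'ne : u' ≠ 0 := by
    intro h
    have := congrArg constantCoeff h
    simp [hu'] at this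
  have hbu : bps * u = 1 := by
    have hu2 : u ^ 2 = 1 - 4 * X := by rw [hu]; linear_combination (-4*X) * hc
    have h2 : u * (bps * u - 1) = 0 := by
      have h1 : bps * (1 - 4*X) = u := by rw [hu]; linear_combination hb
      rw [← hu2] at h1; linear_combination h1
    rcases mul_eq_zero.mp h2 with h | h
    · exact absurd h hune
    · exact sub_eq_zero.mp h
  have hbu' : bps' * u' = 1 := by
    have h := congrArg sg hbu
    rw [map_mul, map_one] at h
    have hsgu : sg u = u' := by
      rw [hu, hu', map_sub, map_mul, map_mul, map_one, sgX]
      have h2 : sg 2 = 2 := by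
        rw [show (2 : PowerSeries ℤ) = ((2:ℕ) : PowerSeries ℤ) by norm_num, map_natCast]
      rw [h2]; show 1 - 2 * -X * cps' = _; ring
    rw [hsgu] at h
    exact h
  have h4 : (cps + cps') * (u + u') = 4 := by
    rw [hu, hu']; linear_combination 2 * hc + 2 * hc'
  apply mul_left_cancel₀ (mul_ne_zero hune hu'ne)
  linear_combination (4*bps'*u' - (cps+cps')*u') * hbu + (4 - (cps+cps')*u) * hbu' - h4

private lemma key (m : ℕ) :
    (4:ℤ) * ∑ i ∈ range (m+1), (Nat.centralBinom i : ℤ) * ((-1)^(m-i) * Nat.centralBinom (m-i)) =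
      ∑ i ∈ range (m+1), ((catalan i : ℤ) + (-1)^i * catalan i) *
        ((Nat.centralBinom (m-i) : ℤ) + (-1)^(m-i) * Nat.centralBinom (m-i)) := by
  have h := congrArg (coeff m) hmain
  rw [show (4 : PowerSeries ℤ) * (bps * bps') = (4:ℤ) • (bps * bps') by
      rw [zsmul_eq_mul]; norm_num,
    map_smul, smul_eq_mul, coeff_mul, coeff_mul,
    Finset.Nat.sum_antidiagonal_eq_sum_range_succ_mk,
    Finset.Nat.sum_antidiagonal_eq_sum_range_succ_mk] at h
  simpa only [map_add, coeff_bps, coeff_cps, coeff_bps', coeff_cps'] using h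

private lemma sum_range_even_odd (n : ℕ) (g : ℕ → ℤ) :
    ∑ i ∈ range (2*n+1), g i = ∑ i ∈ range (n+1), g (2*i) + ∑ i ∈ range n, g (2*i+1) := by
  induction n with
  | zero => simp
  | succ n ih =>
    rw [show 2*(n+1)+1 = (2*n+1)+1+1 by ring, sum_range_succ, sum_range_succ, ih,
      sum_range_succ (fun i => g (2*i)) (n+1), sum_range_succ (fun i => g (2*i+1)) n,
      show 2*(n+1) = 2*n+2 by ring, show 2*n+1+1 = 2*n+2 by omega]
    ring

/-- For every nonnegative integer `n`,
`∑_{i+j=n} (B_{2i} − C_{2i}) B_{2j} = ∑_{i+j=n, j≥1} B_{2i+1} B_{2j−1}`. -/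
theorem sub_catalan_convolution (n : ℕ) :
    ∑ ij ∈ Finset.HasAntidiagonal.antidiagonal n,
        ((Nat.centralBinom (2 * ij.1) : ℤ) - catalan (2 * ij.1)) * Nat.centralBinom (2 * ij.2) =
      ∑ ij ∈ (Finset.HasAntidiagonal.antidiagonal n).filter (fun ij => 1 ≤ ij.2),
        (Nat.centralBinom (2 * ij.1 + 1) * Nat.centralBinom (2 * ij.2 - 1) : ℤ) := by
  have h1 : (∑ i ∈ range (2*n+1),
        (Nat.centralBinom i : ℤ) * ((-1)^(2*n-i) * Nat.centralBinom (2*n-i)))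
      = (∑ i ∈ range (n+1),
          (Nat.centralBinom (2*i) : ℤ) * ((-1)^(2*n-2*i) * Nat.centralBinom (2*n-2*i)))
        + ∑ i ∈ range n,
            (Nat.centralBinom (2*i+1) : ℤ) * ((-1)^(2*n-(2*i+1)) * Nat.centralBinom (2*n-(2*i+1))) :=
    sum_range_even_odd n _
  have h2 : (∑ i ∈ range (2*n+1), ((catalan i : ℤ) + (-1)^i * catalan i) *
        ((Nat.centralBinom (2*n-i) : ℤ) + (-1)^(2*n-i) * Nat.centralBinom (2*n-i)))
      = (∑ i ∈ range (n+1), ((catalan (2*i) : ℤ) + (-1)^(2*i) * catalan (2*i)) *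
          ((Nat.centralBinom (2*n-2*i) : ℤ) + (-1)^(2*n-2*i) * Nat.centralBinom (2*n-2*i)))
        + ∑ i ∈ range n, ((catalan (2*i+1) : ℤ) + (-1)^(2*i+1) * catalan (2*i+1)) *
            ((Nat.centralBinom (2*n-(2*i+1)) : ℤ)
              + (-1)^(2*n-(2*i+1)) * Nat.centralBinom (2*n-(2*i+1))) :=
    sum_range_even_odd n _
  have hE : (∑ i ∈ range (n+1),
        (Nat.centralBinom (2*i) : ℤ) * ((-1)^(2*n-2*i) * Nat.centralBinom (2*n-2*i)))
      = ∑ i ∈ range (n+1), (Nat.centralBinom (2*i) : ℤ) * Nat.centralBinom (2*(n-i)) := by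
    refine sum_congr rfl fun i hi => ?_
    have hi' : i < n + 1 := mem_range.mp hi
    rw [show 2*n-2*i = 2*(n-i) by omega, pow_mul]
    norm_num
  have hO : (∑ i ∈ range n,
        (Nat.centralBinom (2*i+1) : ℤ) * ((-1)^(2*n-(2*i+1)) * Nat.centralBinom (2*n-(2*i+1))))
      = - ∑ i ∈ range n, (Nat.centralBinom (2*i+1) : ℤ) * Nat.centralBinom (2*(n-i)-1) := by
    rw [← sum_neg_distrib]
    refine sum_congr rfl fun i hi => ?_
    have hi' : i < n := mem_range.mp hi
    rw [show 2*n-(2*i+1) = 2*(n-i-1)+1 by omega, pow_succ, pow_mul,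
      show 2*(n-i-1)+1 = 2*(n-i)-1 by omega]
    norm_num
  have hS : (∑ i ∈ range (n+1), ((catalan (2*i) : ℤ) + (-1)^(2*i) * catalan (2*i)) *
        ((Nat.centralBinom (2*n-2*i) : ℤ) + (-1)^(2*n-2*i) * Nat.centralBinom (2*n-2*i)))
      = 4 * ∑ i ∈ range (n+1), (catalan (2*i) : ℤ) * Nat.centralBinom (2*(n-i)) := by
    rw [mul_sum]
    refine sum_congr rfl fun i hi => ?_
    have hi' : i < n + 1 := mem_range.mp hi
    rw [show 2*n-2*i = 2*(n-i) by omega, pow_mul, pow_mul]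
    norm_num
    ring
  have hZ : (∑ i ∈ range n, ((catalan (2*i+1) : ℤ) + (-1)^(2*i+1) * catalan (2*i+1)) *
        ((Nat.centralBinom (2*n-(2*i+1)) : ℤ)
          + (-1)^(2*n-(2*i+1)) * Nat.centralBinom (2*n-(2*i+1)))) = 0 := by
    refine sum_eq_zero fun i hi => ?_
    rw [pow_succ, pow_mul]
    norm_num
  have hkey := key (2*n)
  rw [h1, h2, hE, hO, hS, hZ] at hkey
  -- hkey : 4 * (E + -O) = 4 * S + 0
  simp only [Finset.sum_filter, Finset.Nat.sum_antidiagonal_eq_sum_range_succ_mk,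
    Nat.succ_eq_add_one]
  rw [sum_range_succ (fun i => if 1 ≤ n - i then
      ((Nat.centralBinom (2*i+1) : ℤ) * Nat.centralBinom (2*(n-i)-1)) else 0) n]
  have hlast : (if 1 ≤ n - n then
      ((Nat.centralBinom (2*n+1) : ℤ) * Nat.centralBinom (2*(n-n)-1)) else 0) = 0 := by simp
  rw [hlast, add_zero]
  have hcond : (∑ i ∈ range n, if 1 ≤ n - i then
        ((Nat.centralBinom (2*i+1) : ℤ) * Nat.centralBinom (2*(n-i)-1)) else 0)
      = ∑ i ∈ range n, (Nat.centralBinom (2*i+1) : ℤ) * Nat.centralBinom (2*(n-i)-1) := by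
    refine sum_congr rfl fun i hi => ?_
    have hi' : i < n := mem_range.mp hi
    exact if_pos (by omega)
  rw [hcond]
  have hsub : (∑ i ∈ range (n+1),
        ((Nat.centralBinom (2*i) : ℤ) - catalan (2*i)) * Nat.centralBinom (2*(n-i)))
      = (∑ i ∈ range (n+1), (Nat.centralBinom (2*i) : ℤ) * Nat.centralBinom (2*(n-i)))
        - ∑ i ∈ range (n+1), (catalan (2*i) : ℤ) * Nat.centralBinom (2*(n-i)) := by
    rw [← sum_sub_distrib]
    exact sum_congr rfl fun i _ => by ring
  rw [hsub]
  linarith
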